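/- There is no 2-dimensional subspace M ⊆ ℂ^{2^n} that separates controlled phase errors with error at most 1/10: that is, for any 2-dimensional subspace M there exist diagonal unitaries X, Y with diagonal entries in {1, e^{iπ/4}, e^{iπ/2}} and orthonormal vectors φ, ψ ∈ M such that |⟨Xφ, Yψ⟩| > 1/10. -/

import Mathlib

open scoped BigOperators

/-- Strings in `{0,1}^n`. -/
abbrev Bn (n : ℕ) := Fin n → Bool

/-- Hermitian inner product on `{0,1}^n → ℂ`. -/
noncomputable def ip {n : ℕ} (h g : Bn n → ℂ) : ℂ :=
  ∑ x : Bn n, (starRingEnd ℂ) (h x) * g x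

/-- A phase assignment coming from `Phaseflip`: apply a fixed phase
`θ ∈ {0, π/4, π/2}` on a set `S` and no phase elsewhere. -/
def IsPhaseflip {n : ℕ} (θf : Bn n → ℝ) : Prop :=
  ∃ (S : Finset (Bn n)) (θ : ℝ),
    (θ = 0 ∨ θ = Real.pi / 4 ∨ θ = Real.pi / 2) ∧
    ∀ x, θf x = if x ∈ S then θ else 0

lemma ip_add_left' {n : ℕ} (f g h : Bn n → ℂ) : ip (f + g) h = ip f h + ip g h := by
  simp [ip, add_mul, Finset.sum_add_distrib]

lemma ip_add_right' {n : ℕ} (f g h : Bn n → ℂ) : ip f (g + h) = ip f g + ip f h := by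
  simp [ip, mul_add, Finset.sum_add_distrib]

lemma ip_sub_left' {n : ℕ} (f g h : Bn n → ℂ) : ip (f - g) h = ip f h - ip g h := by
  simp [ip, sub_mul, Finset.sum_sub_distrib]

lemma ip_sub_right' {n : ℕ} (f g h : Bn n → ℂ) : ip f (g - h) = ip f g - ip f h := by
  simp [ip, mul_sub, Finset.sum_sub_distrib]

lemma ip_smul_left' {n : ℕ} (c : ℂ) (f g : Bn n → ℂ) :
    ip (c • f) g = (starRingEnd ℂ) c * ip f g := by
  simp only [ip, Pi.smul_apply, smul_eq_mul, map_mul, Finset.mul_sum]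
  exact Finset.sum_congr rfl fun x _ => by ring

lemma ip_smul_right' {n : ℕ} (c : ℂ) (f g : Bn n → ℂ) : ip f (c • g) = c * ip f g := by
  simp only [ip, Pi.smul_apply, smul_eq_mul, Finset.mul_sum]
  exact Finset.sum_congr rfl fun x _ => by ring

lemma ip_conj' {n : ℕ} (f g : Bn n → ℂ) : ip f g = (starRingEnd ℂ) (ip g f) := by
  simp only [ip, map_sum, map_mul, RingHomCompTriple.comp_apply, RingHom.id_apply,
    Complex.conj_conj]
  exact Finset.sum_congr rfl fun x _ => by ring

lemma norm_sum_one' {n : ℕ} (f : Bn n → ℂ) (h : ip f f = 1) :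
    ∑ x : Bn n, Complex.normSq (f x) = 1 := by
  have : ((∑ x : Bn n, Complex.normSq (f x) : ℝ) : ℂ) = 1 := by
    push_cast
    rw [← h]
    exact Finset.sum_congr rfl fun x _ => by
      rw [← Complex.mul_conj (f x)]; ring
  exact_mod_cast this

lemma pointwise_ineq' (z w : ℂ) :
    Complex.normSq z ≤ ‖(starRingEnd ℂ) z * w‖ +
      |Complex.normSq z - Complex.normSq w| := by
  rw [norm_mul, Complex.norm_conj, ← Complex.sq_norm, ← Complex.sq_norm w]
  have hz := norm_nonneg z
  have hw := norm_nonneg w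
  rcases abs_cases (‖z‖ ^ 2 - ‖w‖ ^ 2) with ⟨h1, h2⟩ | ⟨h1, h2⟩ <;>
      rw [h1] <;>
    nlinarith [sq_nonneg (‖z‖ - ‖w‖), mul_nonneg hz hw,
      sq_nonneg (‖z‖ + ‖w‖)]

lemma exists_on' {n : ℕ} (M : Submodule ℂ (Bn n → ℂ)) (hM : Module.finrank ℂ M = 2) :
    ∃ e1 ∈ M, ∃ e2 ∈ M, ip e1 e1 = 1 ∧ ip e2 e2 = 1 ∧ ip e1 e2 = 0 := by
  classical
  obtain ⟨M', hM'eq⟩ : ∃ M' : Submodule ℂ (EuclideanSpace ℂ (Bn n)),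
      M' = M.comap (WithLp.linearEquiv 2 ℂ (Bn n → ℂ)).toLinearMap := ⟨_, rfl⟩
  have hM' : Module.finrank ℂ M' = 2 := by
    rw [hM'eq, Submodule.comap_equiv_eq_map_symm, LinearEquiv.finrank_map_eq]
    exact hM
  obtain ⟨b⟩ : Nonempty (OrthonormalBasis (Fin 2) ℂ M') :=
    ⟨(stdOrthonormalBasis ℂ M').reindex (finCongr hM')⟩
  have hb := b.orthonormal
  rw [orthonormal_iff_ite] at hb
  have hmem : ∀ i : Fin 2,
      (WithLp.linearEquiv 2 ℂ (Bn n → ℂ)) ((b i : M') : EuclideanSpace ℂ (Bn n)) ∈ M := by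
    intro i
    have h2 : ((b i : M') : EuclideanSpace ℂ (Bn n)) ∈
        M.comap (WithLp.linearEquiv 2 ℂ (Bn n → ℂ)).toLinearMap := hM'eq ▸ (b i : M').2
    exact Submodule.mem_comap.mp h2
  have key : ∀ i j : Fin 2,
      ip ((WithLp.linearEquiv 2 ℂ (Bn n → ℂ)) ((b i : M') : EuclideanSpace ℂ (Bn n)))
        ((WithLp.linearEquiv 2 ℂ (Bn n → ℂ)) ((b j : M') : EuclideanSpace ℂ (Bn n)))
        = if i = j then 1 else 0 := by
    intro i j
    have h := hb i j
    rw [Submodule.coe_inner, PiLp.inner_apply] at h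
    rw [← h]
    simp only [ip, RCLike.inner_apply, WithLp.linearEquiv_apply]
    exact Finset.sum_congr rfl fun x _ => by rw [mul_comm]; rfl
  exact ⟨_, hmem 0, _, hmem 1, by simpa using key 0 0,
    by simpa using key 1 1, by simpa using key 0 1⟩

lemma hexpI' : Complex.exp ((Real.pi / 2 : ℝ) * Complex.I) = Complex.I := by
  rw [Complex.exp_mul_I]
  norm_num [← Complex.ofReal_cos, ← Complex.ofReal_sin]

lemma key_lemma' {n : ℕ} (φ ψ : Bn n → ℂ)
    (hA : (1 : ℝ)/3 ≤ ∑ x : Bn n, |((starRingEnd ℂ) (φ x) * ψ x).re|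
        + ∑ x : Bn n, |((starRingEnd ℂ) (φ x) * ψ x).im|) :
    ∃ θX θY : Bn n → ℝ, IsPhaseflip θX ∧ IsPhaseflip θY ∧
      (1 / 10 : ℝ) <
        ‖(∑ x : Bn n,
          (starRingEnd ℂ) (Complex.exp (θX x * Complex.I) * φ x) *
            (Complex.exp (θY x * Complex.I) * ψ x))‖ := by
  classical
  set a : Bn n → ℂ := fun x => (starRingEnd ℂ) (φ x) * ψ x with ha
  by_cases hQ : (1 : ℝ)/6 ≤ ∑ x : Bn n, |(a x).im|
  · refine ⟨fun x => if 0 ≤ (a x).im then Real.pi / 2 else 0,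
            fun x => if 0 ≤ (a x).im then 0 else Real.pi / 2, ?_, ?_, ?_⟩
    · refine ⟨Finset.univ.filter (fun x => 0 ≤ (a x).im), Real.pi / 2,
        Or.inr (Or.inr rfl), fun x => ?_⟩
      by_cases h : 0 ≤ (a x).im <;> simp [h]
    · refine ⟨Finset.univ.filter (fun x => ¬ 0 ≤ (a x).im), Real.pi / 2,
        Or.inr (Or.inr rfl), fun x => ?_⟩
      by_cases h : 0 ≤ (a x).im
      · simp [h, not_lt.mpr h]
      · simp [h, lt_of_not_ge h]
    · have hterm : ∀ x : Bn n,
          ((starRingEnd ℂ) (Complex.exp (((if 0 ≤ (a x).im then Real.pi / 2 else 0 : ℝ) : ℂ) * Complex.I) * φ x) *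
            (Complex.exp (((if 0 ≤ (a x).im then 0 else Real.pi / 2 : ℝ) : ℂ) * Complex.I) * ψ x)).re
          = |(a x).im| := by
        intro x
        by_cases h : 0 ≤ (a x).im
        · rw [if_pos h, if_pos h, abs_of_nonneg h, hexpI']
          simp only [map_mul, Complex.conj_I, Complex.ofReal_zero, zero_mul, Complex.exp_zero,
            one_mul]
          rw [show -Complex.I * (starRingEnd ℂ) (φ x) * ψ x = -Complex.I * a x by rw [ha]; ring]
          simp [Complex.mul_re]
        · rw [if_neg h, if_neg h, hexpI']
          simp only [map_mul, Complex.ofReal_zero, zero_mul, Complex.exp_zero, map_one, one_mul]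
          rw [show (starRingEnd ℂ) (φ x) * (Complex.I * ψ x) = Complex.I * a x by rw [ha]; ring]
          simp [Complex.mul_re, abs_of_neg (lt_of_not_ge h)]
      have hre : (∑ x : Bn n,
          (starRingEnd ℂ) (Complex.exp (((if 0 ≤ (a x).im then Real.pi / 2 else 0 : ℝ) : ℂ) * Complex.I) * φ x) *
            (Complex.exp (((if 0 ≤ (a x).im then 0 else Real.pi / 2 : ℝ) : ℂ) * Complex.I) * ψ x)).re
          = ∑ x : Bn n, |(a x).im| := by
        rw [Complex.re_sum]
        exact Finset.sum_congr rfl fun x _ => hterm x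
      have hle := Complex.re_le_norm (∑ x : Bn n,
          (starRingEnd ℂ) (Complex.exp (((if 0 ≤ (a x).im then Real.pi / 2 else 0 : ℝ) : ℂ) * Complex.I) * φ x) *
            (Complex.exp (((if 0 ≤ (a x).im then 0 else Real.pi / 2 : ℝ) : ℂ) * Complex.I) * ψ x))
      rw [hre] at hle
      linarith
  · have hP : (1 : ℝ)/6 ≤ ∑ x : Bn n, |(a x).re| := by
      have h1 : ∀ x : Bn n, ‖a x‖ ≤ |(a x).re| + |(a x).im| :=
        fun x => Complex.norm_le_abs_re_add_abs_im (a x)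
      linarith
    refine ⟨fun x => if 0 ≤ (a x).re then 0 else Real.pi / 2,
            fun x => if 0 ≤ (a x).re then Real.pi / 2 else 0, ?_, ?_, ?_⟩
    · refine ⟨Finset.univ.filter (fun x => ¬ 0 ≤ (a x).re), Real.pi / 2,
        Or.inr (Or.inr rfl), fun x => ?_⟩
      by_cases h : 0 ≤ (a x).re
      · simp [h, not_lt.mpr h]
      · simp [h, lt_of_not_ge h]
    · refine ⟨Finset.univ.filter (fun x => 0 ≤ (a x).re), Real.pi / 2,
        Or.inr (Or.inr rfl), fun x => ?_⟩
      by_cases h : 0 ≤ (a x).re <;> simp [h]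
    · have hterm : ∀ x : Bn n,
          ((starRingEnd ℂ) (Complex.exp (((if 0 ≤ (a x).re then 0 else Real.pi / 2 : ℝ) : ℂ) * Complex.I) * φ x) *
            (Complex.exp (((if 0 ≤ (a x).re then Real.pi / 2 else 0 : ℝ) : ℂ) * Complex.I) * ψ x)).im
          = |(a x).re| := by
        intro x
        by_cases h : 0 ≤ (a x).re
        · rw [if_pos h, if_pos h, abs_of_nonneg h, hexpI']
          simp only [map_mul, Complex.ofReal_zero, zero_mul, Complex.exp_zero, map_one, one_mul]
          rw [show (starRingEnd ℂ) (φ x) * (Complex.I * ψ x) = Complex.I * a x by rw [ha]; ring]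
          simp [Complex.mul_im]
        · rw [if_neg h, if_neg h, hexpI']
          simp only [map_mul, Complex.conj_I, Complex.ofReal_zero, zero_mul, Complex.exp_zero,
            one_mul]
          rw [show -Complex.I * (starRingEnd ℂ) (φ x) * ψ x = -Complex.I * a x by rw [ha]; ring]
          simp [Complex.mul_im, abs_of_neg (lt_of_not_ge h)]
      have him : (∑ x : Bn n,
          (starRingEnd ℂ) (Complex.exp (((if 0 ≤ (a x).re then 0 else Real.pi / 2 : ℝ) : ℂ) * Complex.I) * φ x) *
            (Complex.exp (((if 0 ≤ (a x).re then Real.pi / 2 else 0 : ℝ) : ℂ) * Complex.I) * ψ x)).im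
          = ∑ x : Bn n, |(a x).re| := by
        rw [Complex.im_sum]
        exact Finset.sum_congr rfl fun x _ => hterm x
      have hle := Complex.im_le_norm (∑ x : Bn n,
          (starRingEnd ℂ) (Complex.exp (((if 0 ≤ (a x).re then 0 else Real.pi / 2 : ℝ) : ℂ) * Complex.I) * φ x) *
            (Complex.exp (((if 0 ≤ (a x).re then Real.pi / 2 else 0 : ℝ) : ℂ) * Complex.I) * ψ x))
      rw [him] at hle
      linarith

/-- no 2-dimensional subspace `M ⊆ ℂ^{2^n}` separates `Phaseflip`
with error at most `1/10`: there are `X, Y ∈ Phaseflip` and orthonormal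
`φ, ψ ∈ M` with `|⟨Xφ, Yψ⟩| > 1/10`. -/
theorem stmt15 {n : ℕ} (M : Submodule ℂ (Bn n → ℂ))
    (hM : Module.finrank ℂ M = 2) :
    ∃ θX θY : Bn n → ℝ, IsPhaseflip θX ∧ IsPhaseflip θY ∧
      ∃ φ ∈ M, ∃ ψ ∈ M, ip φ φ = 1 ∧ ip ψ ψ = 1 ∧ ip φ ψ = 0 ∧
        (1 / 10 : ℝ) <
          ‖(∑ x : Bn n,
            (starRingEnd ℂ) (Complex.exp (θX x * Complex.I) * φ x) *
              (Complex.exp (θY x * Complex.I) * ψ x))‖ := by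
  classical
  obtain ⟨e1, he1, e2, he2, h11, h22, h12⟩ := exists_on' M hM
  by_cases hB : (1 : ℝ)/3 ≤ ∑ x : Bn n, ‖(starRingEnd ℂ) (e1 x) * e2 x‖
  · -- use e1, e2 directly
    have hA : (1 : ℝ)/3 ≤ ∑ x : Bn n, |((starRingEnd ℂ) (e1 x) * e2 x).re|
        + ∑ x : Bn n, |((starRingEnd ℂ) (e1 x) * e2 x).im| := by
      refine le_trans hB ?_
      rw [← Finset.sum_add_distrib]
      exact Finset.sum_le_sum fun x _ => Complex.norm_le_abs_re_add_abs_im _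
    obtain ⟨θX, θY, hX, hY, hbig⟩ := key_lemma' e1 e2 hA
    exact ⟨θX, θY, hX, hY, e1, he1, e2, he2, h11, h22, h12, hbig⟩
  · -- use (e1 ± e2)/√2
    have hD : (2 : ℝ)/3 ≤ ∑ x : Bn n, |Complex.normSq (e1 x) - Complex.normSq (e2 x)| := by
      have h1 : (1 : ℝ) = ∑ x : Bn n, Complex.normSq (e1 x) := (norm_sum_one' e1 h11).symm
      have h2 : ∑ x : Bn n, Complex.normSq (e1 x) ≤
          ∑ x : Bn n, ‖(starRingEnd ℂ) (e1 x) * e2 x‖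
          + ∑ x : Bn n, |Complex.normSq (e1 x) - Complex.normSq (e2 x)| := by
        rw [← Finset.sum_add_distrib]
        exact Finset.sum_le_sum fun x _ => pointwise_ineq' (e1 x) (e2 x)
      push_neg at hB
      linarith
    obtain ⟨c, hc⟩ : ∃ c : ℂ, c = ((Real.sqrt 2 : ℝ) : ℂ)⁻¹ := ⟨_, rfl⟩
    have hcc : (starRingEnd ℂ) c * c = ((2⁻¹ : ℝ) : ℂ) := by
      have h2 : ((Real.sqrt 2 : ℝ) : ℂ) * ((Real.sqrt 2 : ℝ) : ℂ) = ((2 : ℝ) : ℂ) := by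
        rw [← Complex.ofReal_mul, Real.mul_self_sqrt (by norm_num)]
      rw [hc, map_inv₀, Complex.conj_ofReal, ← mul_inv, h2, Complex.ofReal_inv]
    set φ : Bn n → ℂ := c • (e1 + e2) with hφ
    set ψ : Bn n → ℂ := c • (e1 - e2) with hψ
    have h21 : ip e2 e1 = 0 := by rw [ip_conj' e2 e1, h12]; simp
    have hφφ : ip φ φ = 1 := by
      rw [hφ, ip_smul_left', ip_smul_right', ← mul_assoc, hcc, ip_add_left', ip_add_right',
        ip_add_right', h11, h12, h21, h22]
      norm_num
    have hψψ : ip ψ ψ = 1 := by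
      rw [hψ, ip_smul_left', ip_smul_right', ← mul_assoc, hcc, ip_sub_left', ip_sub_right',
        ip_sub_right', h11, h12, h21, h22]
      norm_num
    have hφψ : ip φ ψ = 0 := by
      rw [hφ, hψ, ip_smul_left', ip_smul_right', ← mul_assoc, hcc, ip_add_left', ip_sub_right',
        ip_sub_right', h11, h12, h21, h22]
      norm_num
    have hre : ∀ x : Bn n, ((starRingEnd ℂ) (φ x) * ψ x).re =
        (Complex.normSq (e1 x) - Complex.normSq (e2 x)) / 2 := by
      intro x
      have e : (starRingEnd ℂ) (φ x) * ψ x =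
          ((2⁻¹ : ℝ) : ℂ) * ((starRingEnd ℂ) (e1 x + e2 x) * (e1 x - e2 x)) := by
        rw [show φ x = c * (e1 x + e2 x) from rfl, show ψ x = c * (e1 x - e2 x) from rfl,
          map_mul, show (starRingEnd ℂ) c * (starRingEnd ℂ) (e1 x + e2 x) * (c * (e1 x - e2 x))
            = ((starRingEnd ℂ) c * c) * ((starRingEnd ℂ) (e1 x + e2 x) * (e1 x - e2 x)) by ring,
          hcc]
      rw [e, Complex.re_ofReal_mul, Complex.mul_re]
      simp only [Complex.conj_re, Complex.conj_im, Complex.add_re, Complex.add_im,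
        Complex.sub_re, Complex.sub_im, Complex.normSq_apply]
      ring
    have hA : (1 : ℝ)/3 ≤ ∑ x : Bn n, |((starRingEnd ℂ) (φ x) * ψ x).re|
        + ∑ x : Bn n, |((starRingEnd ℂ) (φ x) * ψ x).im| := by
      have hsum : ∑ x : Bn n, |((starRingEnd ℂ) (φ x) * ψ x).re| =
          (∑ x : Bn n, |Complex.normSq (e1 x) - Complex.normSq (e2 x)|) / 2 := by
        rw [Finset.sum_div]
        refine Finset.sum_congr rfl fun x _ => ?_
        rw [hre x, abs_div]
        norm_num
      have hnn : (0 : ℝ) ≤ ∑ x : Bn n, |((starRingEnd ℂ) (φ x) * ψ x).im| :=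
        Finset.sum_nonneg fun x _ => abs_nonneg _
      rw [hsum]
      linarith
    obtain ⟨θX, θY, hX, hY, hbig⟩ := key_lemma' φ ψ hA
    exact ⟨θX, θY, hX, hY, φ, M.smul_mem c (M.add_mem he1 he2), ψ,
      M.smul_mem c (M.sub_mem he1 he2), hφφ, hψψ, hφψ, hbig⟩
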